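/- Allahverdyan's fluctuation equality for the weak-measurement work quasi-probability: let H₀ and H₁ be Hermitian n×n matrices with orthonormal eigenbases {|i⟩}ᵢ and {|j⟩}ⱼ and eigenvalues {Eᵢ} and {E'ⱼ}, let U be unitary, β ∈ ℝ, and let ρ be any density matrix. With Z₀ = tr(e^{−βH₀}), Z₁ = tr(e^{−βH₁}), γ₀ = e^{−βH₀}/Z₀ and γ₁ = e^{−βH₁}/Z₁, one has Σ_{i,j} e^{−β(E'ⱼ − Eᵢ)} · Re tr(ρ |i⟩⟨i| U† |j⟩⟨j| U) = (Z₁/Z₀) · Re tr(U† γ₁ U γ₀^{−1} ρ). In particular, if ρ = γ₀ the right-hand side equals Z₁/Z₀ ( = e^{−βΔF}). -/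

import Mathlib

open Matrix
open scoped ComplexOrder

/-- The rank-one outer product `|v⟩⟨v|`. -/
def outer {n : ℕ} (v : Fin n → ℂ) : Matrix (Fin n) (Fin n) ℂ :=
  Matrix.vecMulVec v (star v)

lemma outer_herm {n : ℕ} (x : Fin n → ℂ) : (outer x)ᴴ = outer x := by
  ext k l
  simp [outer, Matrix.vecMulVec, Matrix.conjTranspose_apply, mul_comm]

lemma trace_outer {n : ℕ} (x : Fin n → ℂ) (hx : star x ⬝ᵥ x = 1) :
    (outer x).trace = 1 := by
  simpa [Matrix.trace, Matrix.diag, outer, Matrix.vecMulVec_apply, dotProduct, mul_comm] using hx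

/-- Spectral form of the matrix exponential. -/
lemma spectral_exp {n : ℕ} (H : Matrix (Fin n) (Fin n) ℂ) (v : Fin n → (Fin n → ℂ))
    (E : Fin n → ℝ)
    (hv : ∀ k l, star (v k) ⬝ᵥ v l = if k = l then 1 else 0)
    (hvE : ∀ i, H *ᵥ v i = (E i : ℂ) • v i) (c : ℝ) :
    NormedSpace.exp ((c : ℂ) • H) = ∑ i, (Real.exp (c * E i) : ℂ) • outer (v i) := by
  classical
  set V : Matrix (Fin n) (Fin n) ℂ := Matrix.of (fun k i => v i k) with hV
  have hVl : Vᴴ * V = 1 := by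
    ext k l
    have := hv k l
    simpa [Matrix.mul_apply, Matrix.conjTranspose_apply, hV, dotProduct,
      Matrix.one_apply] using this
  have hVr : V * Vᴴ = 1 := mul_eq_one_comm.mp hVl
  have hHV : H * V = V * Matrix.diagonal (fun i => (E i : ℂ)) := by
    ext k i
    have h1 := congrFun (hvE i) k
    simp only [Matrix.mulVec, dotProduct, Pi.smul_apply, smul_eq_mul] at h1
    simp [Matrix.mul_apply, hV, Matrix.diagonal, h1, mul_comm]
  have hH : (c : ℂ) • H = V * Matrix.diagonal (fun i => ((c : ℂ) * E i)) * Vᴴ := by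
    have : H = V * Matrix.diagonal (fun i => (E i : ℂ)) * Vᴴ := by
      calc H = H * (V * Vᴴ) := by rw [hVr, mul_one]
        _ = (H * V) * Vᴴ := by rw [mul_assoc]
        _ = V * Matrix.diagonal (fun i => (E i : ℂ)) * Vᴴ := by rw [hHV]
    rw [this, ← Matrix.smul_mul, ← Matrix.mul_smul, ← Matrix.diagonal_smul]
    congr 2
  set Vu : (Matrix (Fin n) (Fin n) ℂ)ˣ := ⟨V, Vᴴ, hVr, hVl⟩ with hVu
  have hconj : NormedSpace.exp ((c : ℂ) • H)
      = V * NormedSpace.exp (Matrix.diagonal (fun i => ((c : ℂ) * E i))) * Vᴴ := by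
    rw [hH]
    exact Matrix.exp_units_conj Vu _
  rw [hconj, Matrix.exp_diagonal]
  have hdiag : NormedSpace.exp (fun i => ((c : ℂ) * E i))
      = fun i => (Real.exp (c * E i) : ℂ) := by
    funext i
    rw [Pi.coe_exp, ← Complex.exp_eq_exp_ℂ, ← Complex.ofReal_mul, ← Complex.ofReal_exp]
  rw [hdiag]
  ext k l
  simp only [Matrix.mul_apply, Matrix.diagonal_apply, hV, Matrix.sum_apply, outer,
    Matrix.vecMulVec_apply, mul_ite, ite_mul, mul_zero, zero_mul, Finset.sum_ite_eq,
    Finset.sum_ite_eq', Finset.mem_univ, if_true, Matrix.conjTranspose_apply,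
    Matrix.of_apply, Matrix.smul_apply, smul_eq_mul, Pi.star_apply, RCLike.star_def]
  exact Finset.sum_congr rfl fun i _ => by ring

theorem allahverdyan_fluctuation_equality
    (n : ℕ) (H₀ H₁ U ρ : Matrix (Fin n) (Fin n) ℂ)
    (hH₀ : H₀.IsHermitian) (hH₁ : H₁.IsHermitian)
    (hU : Uᴴ * U = 1)
    (hρ : ρ.PosSemidef) (hρtr : ρ.trace = 1)
    (v w : Fin n → (Fin n → ℂ)) (E E' : Fin n → ℝ)
    (hv : ∀ k l, star (v k) ⬝ᵥ v l = if k = l then 1 else 0)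
    (hw : ∀ k l, star (w k) ⬝ᵥ w l = if k = l then 1 else 0)
    (hvE : ∀ i, H₀ *ᵥ v i = (E i : ℂ) • v i)
    (hwE : ∀ j, H₁ *ᵥ w j = (E' j : ℂ) • w j)
    (β : ℝ)
    (Z₀ Z₁ : ℝ) (γ₀ γ₁ : Matrix (Fin n) (Fin n) ℂ)
    (hZ₀ : Z₀ = (Matrix.trace (NormedSpace.exp ((-β : ℂ) • H₀))).re)
    (hZ₁ : Z₁ = (Matrix.trace (NormedSpace.exp ((-β : ℂ) • H₁))).re)
    (hγ₀ : γ₀ = ((Z₀ : ℂ))⁻¹ • NormedSpace.exp ((-β : ℂ) • H₀))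
    (hγ₁ : γ₁ = ((Z₁ : ℂ))⁻¹ • NormedSpace.exp ((-β : ℂ) • H₁)) :
    (∑ i, ∑ j,
        Real.exp (-β * (E' j - E i))
          * (Matrix.trace (ρ * outer (v i) * Uᴴ * outer (w j) * U)).re)
      = (Z₁ / Z₀) * (Matrix.trace (Uᴴ * γ₁ * U * γ₀⁻¹ * ρ)).re
    ∧ (ρ = γ₀ →
        (Z₁ / Z₀) * (Matrix.trace (Uᴴ * γ₁ * U * γ₀⁻¹ * ρ)).re = Z₁ / Z₀) := by
  classical
  have hne : Nonempty (Fin n) := by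
    rcases Nat.eq_zero_or_pos n with h | h
    · subst h
      simp [Matrix.trace] at hρtr
    · exact ⟨⟨0, h⟩⟩
  -- spectral expansions
  have hexp₀ : NormedSpace.exp ((-β : ℂ) • H₀)
      = ∑ i, (Real.exp (-β * E i) : ℂ) • outer (v i) := by
    have := spectral_exp H₀ v E hv hvE (-β)
    simpa using this
  have hexp₁ : NormedSpace.exp ((-β : ℂ) • H₁)
      = ∑ j, (Real.exp (-β * E' j) : ℂ) • outer (w j) := by
    have := spectral_exp H₁ w E' hw hwE (-β)
    simpa using this
  set S : Matrix (Fin n) (Fin n) ℂ := ∑ i, (Real.exp (β * E i) : ℂ) • outer (v i) with hS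
  set T : Matrix (Fin n) (Fin n) ℂ := ∑ j, (Real.exp (-β * E' j) : ℂ) • outer (w j) with hT
  have hexpS : NormedSpace.exp ((β : ℂ) • H₀) = S := spectral_exp H₀ v E hv hvE β
  have htrv : ∀ i, (outer (v i)).trace = 1 := fun i => trace_outer _ (by simpa using hv i i)
  have htrw : ∀ j, (outer (w j)).trace = 1 := fun j => trace_outer _ (by simpa using hw j j)
  -- partition functions
  have hZ₀' : Z₀ = ∑ i, Real.exp (-β * E i) := by
    rw [hZ₀, hexp₀, Matrix.trace_sum]
    simp only [Matrix.trace_smul, htrv, smul_eq_mul, mul_one, Complex.re_sum, Complex.ofReal_re]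
  have hZ₁' : Z₁ = ∑ j, Real.exp (-β * E' j) := by
    rw [hZ₁, hexp₁, Matrix.trace_sum]
    simp only [Matrix.trace_smul, htrw, smul_eq_mul, mul_one, Complex.re_sum, Complex.ofReal_re]
  have hZ₀pos : 0 < Z₀ := by
    rw [hZ₀']; exact Finset.sum_pos (fun i _ => Real.exp_pos _) Finset.univ_nonempty
  have hZ₁pos : 0 < Z₁ := by
    rw [hZ₁']; exact Finset.sum_pos (fun j _ => Real.exp_pos _) Finset.univ_nonempty
  have hZ₀c : (Z₀ : ℂ) ≠ 0 := by exact_mod_cast hZ₀pos.ne'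
  have hZ₁c : (Z₁ : ℂ) ≠ 0 := by exact_mod_cast hZ₁pos.ne'
  -- inverse of γ₀
  have hright : γ₀ * ((Z₀ : ℂ) • S) = 1 := by
    rw [hγ₀, smul_mul_smul_comm, inv_mul_cancel₀ hZ₀c, one_smul, ← hexpS,
      ← Matrix.exp_add_of_commute _ _ (((Commute.refl H₀).smul_left _).smul_right _)]
    rw [← add_smul]
    norm_num
  have hinv : γ₀⁻¹ = (Z₀ : ℂ) • S := Matrix.inv_eq_right_inv hright
  have hγ₁T : γ₁ = (Z₁ : ℂ)⁻¹ • T := by rw [hγ₁, hexp₁]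
  -- hermiticity
  have hSh : Sᴴ = S := by
    rw [hS]
    simp only [Matrix.conjTranspose_sum, Matrix.conjTranspose_smul]
    exact Finset.sum_congr rfl fun i _ => by
      rw [outer_herm]; simp [← Complex.ofReal_exp, Complex.conj_ofReal]
  have hTh : Tᴴ = T := by
    rw [hT]
    simp only [Matrix.conjTranspose_sum, Matrix.conjTranspose_smul]
    exact Finset.sum_congr rfl fun j _ => by
      rw [outer_herm]; simp [← Complex.ofReal_exp, Complex.conj_ofReal]
  -- the key trace identity
  have key : (∑ i, ∑ j,
        Real.exp (-β * (E' j - E i))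
          * (Matrix.trace (ρ * outer (v i) * Uᴴ * outer (w j) * U)).re)
      = (Matrix.trace (ρ * S * Uᴴ * T * U)).re := by
    have expand : Matrix.trace (ρ * S * Uᴴ * T * U)
        = ∑ i, ∑ j, ((Real.exp (β * E i) * Real.exp (-β * E' j) : ℝ) : ℂ)
            * Matrix.trace (ρ * outer (v i) * Uᴴ * outer (w j) * U) := by
      rw [hS, hT]
      simp only [Finset.mul_sum, Finset.sum_mul, Matrix.smul_mul, Matrix.mul_smul,
        Matrix.trace_sum, Matrix.trace_smul, smul_eq_mul]
      rw [Finset.sum_comm]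
      refine Finset.sum_congr rfl fun i _ => Finset.sum_congr rfl fun j _ => ?_
      push_cast
      ring
    rw [expand, Complex.re_sum]
    refine Finset.sum_congr rfl fun i _ => ?_
    rw [Complex.re_sum]
    refine Finset.sum_congr rfl fun j _ => ?_
    rw [Complex.re_ofReal_mul]
    congr 1
    rw [← Real.exp_add]
    ring_nf
  -- conjugate-transpose trace relation
  have hconjtr : Matrix.trace (Uᴴ * T * U * S * ρ)
      = star (Matrix.trace (ρ * S * Uᴴ * T * U)) := by
    rw [← Matrix.trace_conjTranspose]
    congr 1
    simp [Matrix.conjTranspose_mul, Matrix.mul_assoc, hSh, hTh, hρ.1.eq]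
  have hRHS : Matrix.trace (Uᴴ * γ₁ * U * γ₀⁻¹ * ρ)
      = ((Z₀ / Z₁ : ℝ) : ℂ) * Matrix.trace (Uᴴ * T * U * S * ρ) := by
    rw [hγ₁T, hinv]
    simp only [Matrix.mul_smul, Matrix.smul_mul, Matrix.trace_smul, smul_eq_mul]
    push_cast
    field_simp
  have hrePart : (Matrix.trace (Uᴴ * γ₁ * U * γ₀⁻¹ * ρ)).re
      = (Z₀ / Z₁) * (Matrix.trace (ρ * S * Uᴴ * T * U)).re := by
    rw [hRHS, Complex.re_ofReal_mul, hconjtr]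
    simp [Complex.star_def]
  constructor
  · rw [key, hrePart]
    field_simp
  · intro hrho
    rw [hrho]
    have hleft : γ₀⁻¹ * γ₀ = 1 := by
      rw [hinv]
      exact mul_eq_one_comm.mp hright
    have hUU : U * Uᴴ = 1 := mul_eq_one_comm.mp hU
    have htr1 : Matrix.trace (Uᴴ * γ₁ * U * γ₀⁻¹ * γ₀) = 1 := by
      rw [Matrix.mul_assoc (Uᴴ * γ₁ * U), hleft, mul_one, Matrix.mul_assoc,
        Matrix.trace_mul_comm, Matrix.mul_assoc, hUU, mul_one]
      rw [hγ₁T, Matrix.trace_smul, hT, Matrix.trace_sum]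
      have : ∑ j, Matrix.trace ((Real.exp (-β * E' j) : ℂ) • outer (w j)) = (Z₁ : ℂ) := by
        rw [hZ₁']
        push_cast
        exact Finset.sum_congr rfl fun j _ => by rw [Matrix.trace_smul, htrw, smul_eq_mul, mul_one]
      rw [this, smul_eq_mul, inv_mul_cancel₀ hZ₁c]
    rw [htr1]
    simp
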